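/- Let A₁, …, Aₖ be finite sets. Then the cardinality of their k-fold symmetric difference satisfies |A₁ ⊕ A₂ ⊕ ⋯ ⊕ Aₖ| = Σ_{l=1}^{k} (−1)^{l−1} · 2^{l−1} · Σ_{S ⊆ {1,…,k}, |S| = l} |⋂_{i ∈ S} Aᵢ|. -/

import Mathlib

/-- `desc T r v` is the set of descendants of `v` in the tree `T` rooted at `r`
(vertices `u` such that `v` lies on every path from `r` to `u`), including `v` itself. -/
def desc {V : Type*} (T : SimpleGraph V) (r v : V) : Set V :=
  {u | ∀ p : T.Walk r u, p.IsPath → v ∈ p.support}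

/-- `cut G A` is `δ(A)`: the set of edges of `G` with exactly one endpoint in `A`. -/
def cut {V : Type*} (G : SimpleGraph V) (A : Set V) : Set (Sym2 V) :=
  {e | e ∈ G.edgeSet ∧ ∃ x y, e = s(x, y) ∧ x ∈ A ∧ y ∉ A}

open Classical in
/-- `xorFam s A` is the symmetric difference `⊕_{i ∈ s} A i`:
an element belongs to it iff it belongs to an odd number of the sets `A i`. -/
noncomputable def xorFam {ι α : Type*} (s : Finset ι) (A : ι → Set α) : Set α :=
  {x | Odd (s.filter (fun i => x ∈ A i)).card}

lemma aux_binom (k m : ℕ) (hm : m ≤ k) :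
    ∑ l ∈ Finset.Icc 1 k, (-1 : ℤ) ^ (l - 1) * 2 ^ (l - 1) * (m.choose l : ℤ) =
      if Odd m then 1 else 0 := by
  have h2 : (2 : ℤ) ≠ 0 := by norm_num
  apply mul_left_cancel₀ h2
  rw [Finset.mul_sum]
  have key : ∑ l ∈ Finset.Icc 1 k, 2 * ((-1 : ℤ) ^ (l - 1) * 2 ^ (l - 1) * (m.choose l : ℤ)) =
      - ∑ l ∈ Finset.Icc 1 k, (-2 : ℤ) ^ l * (m.choose l : ℤ) := by
    rw [← Finset.sum_neg_distrib]
    apply Finset.sum_congr rfl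
    intro l hl
    simp only [Finset.mem_Icc] at hl
    obtain ⟨j, rfl⟩ := Nat.exists_eq_add_of_le hl.1
    simp only [Nat.add_sub_cancel_left, pow_add]
    have hneg : ((-2:ℤ))^j = (-1:ℤ)^j * 2^j := by
      rw [show ((-2:ℤ)) = (-1)*2 by norm_num, mul_pow]
    rw [hneg]; ring
  rw [key]
  have hext : ∑ l ∈ Finset.range (m+1), (-2 : ℤ) ^ l * (m.choose l : ℤ) =
      ∑ l ∈ Finset.range (k+1), (-2 : ℤ) ^ l * (m.choose l : ℤ) := by
    apply Finset.sum_subset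
    · intro x hx; simp at hx ⊢; omega
    · intro x _ hx
      simp only [Finset.mem_range, not_lt] at hx
      rw [Nat.choose_eq_zero_of_lt (by omega)]; simp
  have hpow : ((-2 : ℤ) + 1) ^ m = ∑ l ∈ Finset.range (m+1),
      (-2:ℤ)^l * 1^(m-l) * (m.choose l : ℤ) := add_pow (-2 : ℤ) 1 m
  simp only [one_pow, mul_one] at hpow
  have hrange : Finset.range (k+1) = insert 0 (Finset.Icc 1 k) := by
    ext x; simp; omega
  have h0 : (0 : ℕ) ∉ Finset.Icc 1 k := by simp
  rw [hrange, Finset.sum_insert h0] at hext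
  simp only [pow_zero, Nat.choose_zero_right, Nat.cast_one, one_mul] at hext
  have : ∑ l ∈ Finset.Icc 1 k, (-2 : ℤ) ^ l * (m.choose l : ℤ) = (-1:ℤ)^m - 1 := by
    have h := hpow
    rw [hext] at h
    norm_num at h
    linarith
  rw [this]
  rcases Nat.even_or_odd m with he | ho
  · rw [he.neg_one_pow, if_neg (by simpa using he)]; ring
  · rw [ho.neg_one_pow, if_pos ho]; ring

theorem stmt1 {α : Type*} (k : ℕ) (A : Fin k → Set α) (hfin : ∀ i, (A i).Finite) :
    ((xorFam Finset.univ A).ncard : ℤ) =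
      ∑ l ∈ Finset.Icc 1 k, (-1 : ℤ) ^ (l - 1) * 2 ^ (l - 1) *
        ∑ S ∈ Finset.univ.filter (fun S : Finset (Fin k) => S.card = l),
          ((⋂ i ∈ S, A i).ncard : ℤ) := by
  classical
  have hU : (⋃ i, A i).Finite := Set.finite_iUnion hfin
  set U := hU.toFinset with hUdef
  set F : α → Finset (Fin k) := fun x => Finset.univ.filter (fun i => x ∈ A i) with hF
  have hmemU : ∀ x i, x ∈ A i → x ∈ U := fun x i hx => by
    rw [hUdef, Set.Finite.mem_toFinset]; exact Set.mem_iUnion.2 ⟨i, hx⟩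
  -- LHS
  have hL : xorFam Finset.univ A = ↑(U.filter (fun x => Odd (F x).card)) := by
    ext x
    simp only [xorFam, Set.mem_setOf_eq, Finset.coe_filter, Set.mem_setOf_eq, Finset.mem_coe]
    constructor
    · intro h
      refine ⟨?_, by convert h using 3⟩
      obtain ⟨i, hi⟩ : ∃ i, x ∈ A i := by
        by_contra hc; push_neg at hc
        rw [Finset.filter_false_of_mem (fun i _ => hc i)] at h
        simp at h
      exact hmemU x i hi
    · intro h; convert h.2 using 3
  -- RHS inner sets
  have hS : ∀ l ∈ Finset.Icc 1 k,
      ∀ S ∈ Finset.univ.filter (fun S : Finset (Fin k) => S.card = l),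
      ((⋂ i ∈ S, A i).ncard : ℤ) = ∑ x ∈ U, (if S ⊆ F x then (1:ℤ) else 0) := by
    intro l hl S hSm
    simp only [Finset.mem_filter, Finset.mem_Icc] at hl hSm
    have hSne : S.Nonempty := Finset.card_pos.1 (by omega)
    have hset : (⋂ i ∈ S, A i) = ↑(U.filter (fun x => S ⊆ F x)) := by
      ext x
      simp only [Set.mem_iInter, Finset.coe_filter, Set.mem_setOf_eq, Finset.mem_coe]
      constructor
      · intro h
        refine ⟨hmemU x hSne.choose (h _ hSne.choose_spec), fun i hi => ?_⟩
        simp only [hF, Finset.mem_filter, Finset.mem_univ, true_and]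
        exact h i hi
      · intro h i hi
        have := h.2 hi
        simp only [hF, Finset.mem_filter, Finset.mem_univ, true_and] at this
        exact this
    rw [hset, Set.ncard_coe_finset, Finset.sum_boole]
  have key : ∀ x, ∑ l ∈ Finset.Icc 1 k, (-1 : ℤ) ^ (l - 1) * 2 ^ (l - 1) *
      ∑ S ∈ Finset.univ.filter (fun S : Finset (Fin k) => S.card = l),
        (if S ⊆ F x then (1:ℤ) else 0) = if Odd (F x).card then 1 else 0 := by
    intro x
    have hcount : ∀ l, ∑ S ∈ Finset.univ.filter (fun S : Finset (Fin k) => S.card = l),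
        (if S ⊆ F x then (1:ℤ) else 0) = ((F x).card.choose l : ℤ) := by
      intro l
      rw [Finset.sum_boole]
      congr 1
      rw [Finset.filter_filter]
      have : Finset.filter (fun S : Finset (Fin k) => S.card = l ∧ S ⊆ F x) Finset.univ
          = (F x).powersetCard l := by
        ext S; simp [Finset.mem_powersetCard]; tauto
      rw [this, Finset.card_powersetCard]
    simp only [hcount]
    exact aux_binom k (F x).card (le_trans (Finset.card_le_univ _) (by simp))
  have hRHS : ∑ l ∈ Finset.Icc 1 k, (-1 : ℤ) ^ (l - 1) * 2 ^ (l - 1) *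
      ∑ S ∈ Finset.univ.filter (fun S : Finset (Fin k) => S.card = l),
        ((⋂ i ∈ S, A i).ncard : ℤ)
      = ∑ x ∈ U, (if Odd (F x).card then (1:ℤ) else 0) := by
    have e1 : ∀ l ∈ Finset.Icc 1 k, (-1 : ℤ) ^ (l - 1) * 2 ^ (l - 1) *
        ∑ S ∈ Finset.univ.filter (fun S : Finset (Fin k) => S.card = l),
          ((⋂ i ∈ S, A i).ncard : ℤ)
        = ∑ x ∈ U, (-1 : ℤ) ^ (l - 1) * 2 ^ (l - 1) *
            ∑ S ∈ Finset.univ.filter (fun S : Finset (Fin k) => S.card = l),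
              (if S ⊆ F x then (1:ℤ) else 0) := by
      intro l hl
      rw [Finset.sum_congr rfl (hS l hl), Finset.sum_comm, Finset.mul_sum]
    rw [Finset.sum_congr rfl e1, Finset.sum_comm]
    exact Finset.sum_congr rfl (fun x _ => key x)
  rw [hRHS, hL, Set.ncard_coe_finset, Finset.sum_boole]
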